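/- arXiv:math/0605539 — 3 statements merged into one kernel-verified Lean document; each statement's English description precedes it below -/
import Mathlib

section
/- Let r₁,…,rₙ be pairwise distinct real numbers, and let A be an n×n quaternion matrix with A·A* = I such that D := A · Diag(r₁,…,rₙ) · A* is a diagonal matrix. Then there exists a permutation w ∈ S_n such that D = Diag(r_{w(1)},…,r_{w(n)}). -/
open Matrix

private lemma vecMulLinear_inj {n : ℕ} {M N : Matrix (Fin n) (Fin n) (Quaternion ℝ)}
    (h : M.vecMulLinear = N.vecMulLinear) : M = N := by
  apply Matrix.ext
  intro i j
  have := congrFun (congrFun (congrArg DFunLike.coe h) (Pi.single i 1)) j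
  simpa [Matrix.vecMul, dotProduct, Pi.single_apply] using this

private lemma mul_eq_one_comm' {n : ℕ} {A B : Matrix (Fin n) (Fin n) (Quaternion ℝ)}
    (h : A * B = 1) : B * A = 1 := by
  have key : ∀ (M N : Matrix (Fin n) (Fin n) (Quaternion ℝ)),
      (M * N).vecMulLinear = N.vecMulLinear * M.vecMulLinear := by
    intro M N
    apply LinearMap.ext
    intro x
    show x ᵥ* (M * N) = (x ᵥ* M) ᵥ* N
    rw [Matrix.vecMul_vecMul]
  apply vecMulLinear_inj
  rw [key]
  have h1 : B.vecMulLinear * A.vecMulLinear = 1 := by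
    rw [← key, h]
    apply LinearMap.ext
    intro x
    simp [Matrix.vecMul_one]
  have h2 := mul_eq_one_comm.mp h1
  rw [h2]
  symm
  apply LinearMap.ext
  intro x
  simp [Matrix.vecMul_one]

/-- If `r₁,…,rₙ` are pairwise distinct reals, `A ⬝ A* = I`, and
`D = A ⬝ Diag(r₁,…,rₙ) ⬝ A*` is diagonal, then `D = Diag(r_{w(1)},…,r_{w(n)})` for some
permutation `w ∈ S_n`. -/
theorem diagonal_in_orbit_is_permuted (n : ℕ) (r : Fin n → ℝ)
    (hr : Function.Injective r) (A : Matrix (Fin n) (Fin n) (Quaternion ℝ))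
    (hA : A * Aᴴ = 1)
    (hD : (A * Matrix.diagonal (fun ν => (r ν : Quaternion ℝ)) * Aᴴ).IsDiag) :
    ∃ w : Equiv.Perm (Fin n),
      A * Matrix.diagonal (fun ν => (r ν : Quaternion ℝ)) * Aᴴ =
        Matrix.diagonal (fun ν => (r (w ν) : Quaternion ℝ)) := by
  classical
  set M : Matrix (Fin n) (Fin n) (Quaternion ℝ) :=
    Matrix.diagonal (fun ν => (r ν : Quaternion ℝ)) with hM
  set D : Matrix (Fin n) (Fin n) (Quaternion ℝ) := A * M * Aᴴ with hDdef
  have hA' : Aᴴ * A = 1 := mul_eq_one_comm' hA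
  -- D * A = A * M
  have hDA : D * A = A * M := by
    rw [hDdef, Matrix.mul_assoc, Matrix.mul_assoc, hA', Matrix.mul_one]
  -- entrywise: D i i * A i j = A i j * r j
  have key : ∀ i j, D i i * A i j = A i j * (r j : Quaternion ℝ) := by
    intro i j
    have h1 : (D * A) i j = D i i * A i j := by
      rw [Matrix.mul_apply]
      apply Finset.sum_eq_single i
      · intro k _ hk
        rw [hD (Ne.symm hk), zero_mul]
      · intro h; exact absurd (Finset.mem_univ i) h
    have h2 : (A * M) i j = A i j * (r j : Quaternion ℝ) := by
      rw [hM, Matrix.mul_diagonal]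
    rw [← h1, hDA, h2]
  -- each row of A has a nonzero entry
  have row_ne : ∀ i, ∃ j, A i j ≠ 0 := by
    intro i
    by_contra h
    push_neg at h
    have : (A * Aᴴ) i i = 0 := by
      rw [Matrix.mul_apply]
      apply Finset.sum_eq_zero
      intro k _
      rw [h k, zero_mul]
    rw [hA] at this
    simp at this
  -- if A i j ≠ 0 then D i i = r j
  have diag_eq : ∀ i j, A i j ≠ 0 → D i i = (r j : Quaternion ℝ) := by
    intro i j hij
    have := key i j
    rw [← Quaternion.coe_commutes] at this
    have h0 : (D i i - (r j : Quaternion ℝ)) * A i j = 0 := by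
      rw [sub_mul, this, sub_self]
    rcases mul_eq_zero.mp h0 with h | h
    · exact sub_eq_zero.mp h
    · exact absurd h hij
  -- choose the nonzero column in each row
  choose f hf using row_ne
  have hDii : ∀ i, D i i = (r (f i) : Quaternion ℝ) := fun i => diag_eq i (f i) (hf i)
  -- A i j = 0 for j ≠ f i
  have vanish : ∀ i j, j ≠ f i → A i j = 0 := by
    intro i j hj
    by_contra h
    have h1 : (r j : Quaternion ℝ) = (r (f i) : Quaternion ℝ) := by
      rw [← diag_eq i j h, hDii]
    exact hj (hr (Quaternion.coe_injective h1))
  -- f is injective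
  have finj : Function.Injective f := by
    intro i i' hii'
    by_contra hne
    have h0 : (A * Aᴴ) i i' = 0 := by rw [hA, Matrix.one_apply_ne hne]
    rw [Matrix.mul_apply] at h0
    have h1 : ∀ j ∈ Finset.univ, j ≠ f i → A i j * Aᴴ j i' = 0 := by
      intro j _ hj
      rw [vanish i j hj, zero_mul]
    rw [Finset.sum_eq_single_of_mem (f i) (Finset.mem_univ _) h1] at h0
    rcases mul_eq_zero.mp h0 with h | h
    · exact hf i h
    · apply hf i'
      rw [← hii']
      rw [Matrix.conjTranspose_apply] at h
      exact star_eq_zero.mp h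
  have fbij : Function.Bijective f := (Finite.injective_iff_bijective).mp finj
  refine ⟨Equiv.ofBijective f fbij, ?_⟩
  show D = _
  apply Matrix.ext
  intro i j
  by_cases hij : i = j
  · subst hij
    rw [Matrix.diagonal_apply_eq, hDii, Equiv.ofBijective_apply]
  · rw [hD hij, Matrix.diagonal_apply_ne _ hij]
end

section
/- Fix a permutation w ∈ S_n and indices 1 ≤ p < q ≤ n, and let K' be the set of n×n quaternion matrices B with B·B* = I whose entries vanish except on the diagonal and at the positions (w(p),w(q)) and (w(q),w(p)). Then the set of n-tuples of lines (ℍ(e_{w(1)}·B*), …, ℍ(e_{w(n)}·B*)) for B ∈ K' equals the set of all n-tuples (L₁,…,Lₙ) of nonzero ℍ-lines in ℍⁿ such that L_ν = ℍe_{w(ν)} for all ν ∉ {p,q}, and L_p and L_q are mutually orthogonal ℍ-lines contained in the submodule ℍe_{w(p)} ⊕ ℍe_{w(q)}. -/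
open Matrix

noncomputable def qForm (n : ℕ) (h k : Fin n → Quaternion ℝ) : Quaternion ℝ :=
  ∑ i : Fin n, h i * star (k i)

namespace SwpqAux


local notation "H" => Quaternion ℝ

lemma star_qForm (n : ℕ) (h k : Fin n → H) : star (qForm n h k) = qForm n k h := by
  simp [qForm, star_sum, StarMul.star_mul, mul_comm]

lemma qForm_smul_left (n : ℕ) (a : H) (h k : Fin n → H) :
    qForm n (a • h) k = a * qForm n h k := by
  simp [qForm, Finset.mul_sum, mul_assoc]

lemma qForm_smul_right (n : ℕ) (b : H) (h k : Fin n → H) :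
    qForm n h (b • k) = qForm n h k * star b := by
  simp [qForm, Finset.sum_mul, StarMul.star_mul, mul_assoc]

lemma qForm_add_left (n : ℕ) (h h' k : Fin n → H) :
    qForm n (h + h') k = qForm n h k + qForm n h' k := by
  simp [qForm, add_mul, Finset.sum_add_distrib]

lemma qForm_add_right (n : ℕ) (h k k' : Fin n → H) :
    qForm n h (k + k') = qForm n h k + qForm n h k' := by
  simp [qForm, mul_add, Finset.sum_add_distrib]

lemma qForm_single_right (n : ℕ) (v : Fin n → H) (i : Fin n) :
    qForm n v (Pi.single i 1) = v i := by
  simp [qForm, Pi.single_apply, apply_ite (star : H → H), mul_ite]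

lemma qForm_single_left (n : ℕ) (v : Fin n → H) (i : Fin n) :
    qForm n (Pi.single i 1) v = star (v i) := by
  rw [← star_qForm, qForm_single_right]

lemma mul_eq_one_comm' {n : ℕ} {M N : Matrix (Fin n) (Fin n) H} (h : M * N = 1) :
    N * M = 1 := by
  let f : (Fin n → H) →ₗ[H] (Fin n → H) :=
    { toFun := fun v => v ᵥ* N
      map_add' := fun x y => Matrix.add_vecMul _ _ _
      map_smul' := fun c x => by simpa using Matrix.smul_vecMul c x N }
  have hsurj : Function.Surjective f := fun y =>
    ⟨y ᵥ* M, by simp only [f, LinearMap.coe_mk, AddHom.coe_mk, Matrix.vecMul_vecMul, h,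
      Matrix.vecMul_one]⟩
  have hinj : Function.Injective f := LinearMap.injective_iff_surjective.mpr hsurj
  have key : ∀ v : Fin n → H, v ᵥ* (N * M) = v := by
    intro v
    apply hinj
    show (v ᵥ* (N * M)) ᵥ* N = v ᵥ* N
    rw [Matrix.vecMul_vecMul, mul_assoc, h, mul_one]
  refine Matrix.ext fun i j => ?_
  have := congrFun (key (Pi.single i 1)) j
  rw [Matrix.single_one_vecMul, Matrix.row] at this
  rw [this, Matrix.one_apply, Pi.single_apply]
  simp [eq_comm]

lemma row_ne_zero {n : ℕ} {M N : Matrix (Fin n) (Fin n) H} (h : M * N = 1) (i : Fin n) :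
    M i ≠ 0 := by
  intro hi
  have h1 : Pi.single i (1 : H) ᵥ* (M * N) = Pi.single i 1 := by
    rw [h, Matrix.vecMul_one]
  rw [← Matrix.vecMul_vecMul, Matrix.single_one_vecMul, Matrix.row, hi, Matrix.zero_vecMul] at h1
  simpa using congrFun h1 i

lemma qForm_pair {n : ℕ} {i j : Fin n} (hij : i ≠ j) (a b a' b' : H) :
    qForm n (a • (Pi.single i 1 : Fin n → H) + b • (Pi.single j 1 : Fin n → H))
      (a' • (Pi.single i 1 : Fin n → H) + b' • (Pi.single j 1 : Fin n → H))
      = a * star a' + b * star b' := by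
  simp [qForm_add_left, qForm_add_right, qForm_smul_left, qForm_smul_right,
    qForm_single_right, Pi.single_apply, hij, hij.symm]



end SwpqAux

/-- Description of the four-sphere `𝒮_{w,pq}` as a quaternionic projective line: the
orbit of the flag `(ℍe_{w(1)},…,ℍe_{w(n)})` under the subgroup `K'` of symplectic
matrices supported on the diagonal and the positions `(w(p),w(q))`, `(w(q),w(p))`
equals the set of tuples of lines `(L₁,…,Lₙ)` with `L_ν = ℍe_{w(ν)}` for `ν ∉ {p,q}`
and `L_p, L_q` mutually orthogonal lines in `ℍe_{w(p)} ⊕ ℍe_{w(q)}`. -/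
theorem sphere_Swpq_description (n : ℕ) (w : Equiv.Perm (Fin n)) (p q : Fin n)
    (hpq : p < q) :
    {L : Fin n → Submodule (Quaternion ℝ) (Fin n → Quaternion ℝ) |
        ∃ B : Matrix (Fin n) (Fin n) (Quaternion ℝ), B * Bᴴ = 1 ∧
          (∀ i j : Fin n, i ≠ j → (i, j) ≠ (w p, w q) → (i, j) ≠ (w q, w p) → B i j = 0) ∧
          ∀ ν : Fin n, L ν = Submodule.span (Quaternion ℝ)
            {Matrix.vecMul (Pi.single (w ν) (1 : Quaternion ℝ)) Bᴴ}} =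
      {L : Fin n → Submodule (Quaternion ℝ) (Fin n → Quaternion ℝ) |
        (∀ ν : Fin n, ∃ v : Fin n → Quaternion ℝ, v ≠ 0 ∧
          L ν = Submodule.span (Quaternion ℝ) {v}) ∧
        (∀ ν : Fin n, ν ≠ p → ν ≠ q →
          L ν = Submodule.span (Quaternion ℝ) {Pi.single (w ν) (1 : Quaternion ℝ)}) ∧
        (∀ h ∈ L p, ∀ k ∈ L q, qForm n h k = 0) ∧
        L p ≤ Submodule.span (Quaternion ℝ)
          {Pi.single (w p) (1 : Quaternion ℝ), Pi.single (w q) (1 : Quaternion ℝ)} ∧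
        L q ≤ Submodule.span (Quaternion ℝ)
          {Pi.single (w p) (1 : Quaternion ℝ), Pi.single (w q) (1 : Quaternion ℝ)}} := by
  have hpq' : p ≠ q := hpq.ne
  have hwpq : w p ≠ w q := fun h => hpq' (w.injective h)
  ext L
  simp only [Set.mem_setOf_eq]
  constructor
  · rintro ⟨B, hB, hsupp, hL⟩
    have hBB : Bᴴ * B = 1 := SwpqAux.mul_eq_one_comm' hB
    have hL' : ∀ ν, L ν = Submodule.span (Quaternion ℝ) {Bᴴ (w ν)} := fun ν => by
      rw [hL ν, Matrix.single_one_vecMul, Matrix.row]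
    have hrow : ∀ i, Bᴴ i ≠ 0 := SwpqAux.row_ne_zero hBB
    -- entries of the rows
    have hent : ∀ ν j, j ≠ w ν → ¬(j = w p ∧ ν = q) → ¬(j = w q ∧ ν = p) →
        Bᴴ (w ν) j = 0 := by
      intro ν j hj h1 h2
      rw [Matrix.conjTranspose_apply, hsupp j (w ν) hj ?_ ?_, star_zero]
      · intro hc
        rw [Prod.mk.injEq] at hc
        exact h1 ⟨hc.1, w.injective hc.2⟩
      · intro hc
        rw [Prod.mk.injEq] at hc
        exact h2 ⟨hc.1, w.injective hc.2⟩
    refine ⟨fun ν => ⟨Bᴴ (w ν), hrow _, hL' ν⟩, ?_, ?_, ?_, ?_⟩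
    · intro ν hνp hνq
      have hzero : ∀ j, j ≠ w ν → Bᴴ (w ν) j = 0 := fun j hj =>
        hent ν j hj (fun h => hνq h.2) (fun h => hνp h.2)
      set c := Bᴴ (w ν) (w ν) with hc
      have hrowval : Bᴴ (w ν) = c • (Pi.single (w ν) 1 : Fin n → Quaternion ℝ) := by
        funext j
        by_cases hj : j = w ν
        · subst hj; simp [hc, Matrix.conjTranspose_apply]
        · rw [hzero j hj]; simp [Pi.single_apply, hj]
      have hc0 : c ≠ 0 := by
        intro h
        apply hrow (w ν)
        rw [hrowval, h, zero_smul]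
      rw [hL' ν, hrowval, Submodule.span_singleton_smul_eq (isUnit_iff_ne_zero.mpr hc0)]
    · intro h hh k hk
      rw [hL' p] at hh
      rw [hL' q] at hk
      obtain ⟨a, rfl⟩ := Submodule.mem_span_singleton.mp hh
      obtain ⟨b, rfl⟩ := Submodule.mem_span_singleton.mp hk
      rw [SwpqAux.qForm_smul_left, SwpqAux.qForm_smul_right]
      have hkey : qForm n (Bᴴ (w p)) (Bᴴ (w q)) = (Bᴴ * B) (w p) (w q) := by
        simp [qForm, Matrix.mul_apply, Matrix.conjTranspose_apply]
      rw [hkey, hBB, Matrix.one_apply_ne hwpq] at *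
      simp [hkey]
    · rw [hL' p, Submodule.span_le, Set.singleton_subset_iff, SetLike.mem_coe,
        Submodule.mem_span_pair]
      refine ⟨Bᴴ (w p) (w p), Bᴴ (w p) (w q), ?_⟩
      funext j
      by_cases h1 : j = w p
      · subst h1; simp [Pi.single_apply, hwpq.symm]
      · by_cases h2 : j = w q
        · subst h2; simp [Pi.single_apply, hwpq]
        · rw [hent p j h1 (fun h => hpq' h.2) (fun h => h2 h.1)]
          simp [Pi.single_apply, h1, h2]
    · rw [hL' q, Submodule.span_le, Set.singleton_subset_iff, SetLike.mem_coe,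
        Submodule.mem_span_pair]
      refine ⟨Bᴴ (w q) (w p), Bᴴ (w q) (w q), ?_⟩
      funext j
      by_cases h1 : j = w p
      · subst h1; simp [Pi.single_apply, hwpq.symm]
      · by_cases h2 : j = w q
        · subst h2; simp [Pi.single_apply, hwpq]
        · rw [hent q j h2 (fun h => h1 h.1) (fun h => hpq' h.2.symm)]
          simp [Pi.single_apply, h1, h2]
  · rintro ⟨hgen, hfix, horth, hLp, hLq⟩
    obtain ⟨v, hv0, hvsp⟩ := hgen p
    obtain ⟨v', hv'0, hv'sp⟩ := hgen q
    have hvmem : v ∈ L p := by rw [hvsp]; exact Submodule.mem_span_singleton_self v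
    have hv'mem : v' ∈ L q := by rw [hv'sp]; exact Submodule.mem_span_singleton_self v'
    obtain ⟨a, b, hab⟩ := Submodule.mem_span_pair.mp (hLp hvmem)
    obtain ⟨a', b', hab'⟩ := Submodule.mem_span_pair.mp (hLq hv'mem)
    have hvval : ∀ j, j ≠ w p → j ≠ w q → v j = 0 := by
      intro j h1 h2
      rw [← hab]; simp [Pi.single_apply, h1, h2]
    have hv'val : ∀ j, j ≠ w p → j ≠ w q → v' j = 0 := by
      intro j h1 h2
      rw [← hab']; simp [Pi.single_apply, h1, h2]
    -- the normalizing scalars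
    have hab0 : ¬(a = 0 ∧ b = 0) := by
      rintro ⟨rfl, rfl⟩
      exact hv0 (by rw [← hab]; simp)
    have ha'b'0 : ¬(a' = 0 ∧ b' = 0) := by
      rintro ⟨rfl, rfl⟩
      exact hv'0 (by rw [← hab']; simp)
    set s : ℝ := Quaternion.normSq a + Quaternion.normSq b with hs
    set s' : ℝ := Quaternion.normSq a' + Quaternion.normSq b' with hs'
    have hs0 : 0 < s := by
      rcases not_and_or.mp hab0 with h | h
      · exact add_pos_of_pos_of_nonneg
          (lt_of_le_of_ne (Quaternion.normSq_nonneg)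
            (Ne.symm (Quaternion.normSq_ne_zero.mpr h))) Quaternion.normSq_nonneg
      · exact add_pos_of_nonneg_of_pos Quaternion.normSq_nonneg
          (lt_of_le_of_ne (Quaternion.normSq_nonneg)
            (Ne.symm (Quaternion.normSq_ne_zero.mpr h)))
    have hs'0 : 0 < s' := by
      rcases not_and_or.mp ha'b'0 with h | h
      · exact add_pos_of_pos_of_nonneg
          (lt_of_le_of_ne (Quaternion.normSq_nonneg)
            (Ne.symm (Quaternion.normSq_ne_zero.mpr h))) Quaternion.normSq_nonneg
      · exact add_pos_of_nonneg_of_pos Quaternion.normSq_nonneg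
          (lt_of_le_of_ne (Quaternion.normSq_nonneg)
            (Ne.symm (Quaternion.normSq_ne_zero.mpr h)))
    set c : Quaternion ℝ := (((Real.sqrt s)⁻¹ : ℝ) : Quaternion ℝ) with hc
    set c' : Quaternion ℝ := (((Real.sqrt s')⁻¹ : ℝ) : Quaternion ℝ) with hc'
    have hsqrt : Real.sqrt s ≠ 0 := ne_of_gt (Real.sqrt_pos.mpr hs0)
    have hsqrt' : Real.sqrt s' ≠ 0 := ne_of_gt (Real.sqrt_pos.mpr hs'0)
    have hc0 : c ≠ 0 := by
      rw [hc]
      exact_mod_cast fun h => hsqrt (by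
        have := Quaternion.coe_injective (by exact_mod_cast h : (((Real.sqrt s)⁻¹ : ℝ) : Quaternion ℝ) = ((0 : ℝ) : Quaternion ℝ))
        exact inv_eq_zero.mp this ▸ rfl)
    have hc'0 : c' ≠ 0 := by
      rw [hc']
      exact_mod_cast fun h => hsqrt' (by
        have := Quaternion.coe_injective (by exact_mod_cast h : (((Real.sqrt s')⁻¹ : ℝ) : Quaternion ℝ) = ((0 : ℝ) : Quaternion ℝ))
        exact inv_eq_zero.mp this ▸ rfl)
    set u : Fin n → Quaternion ℝ := c • v with hu
    set u' : Fin n → Quaternion ℝ := c' • v' with hu'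
    have hnorm : ∀ t : ℝ, 0 < t → ((((Real.sqrt t)⁻¹ : ℝ) : Quaternion ℝ)) * ((t : ℝ) : Quaternion ℝ) * star ((((Real.sqrt t)⁻¹ : ℝ) : Quaternion ℝ)) = 1 := by
      intro t ht
      rw [Quaternion.star_coe, ← Quaternion.coe_mul, ← Quaternion.coe_mul]
      rw [show (Real.sqrt t)⁻¹ * t * (Real.sqrt t)⁻¹ = 1 by
        have h1 : Real.sqrt t ≠ 0 := ne_of_gt (Real.sqrt_pos.mpr ht)
        rw [mul_comm, ← mul_assoc, ← Real.sqrt_inv, Real.mul_self_sqrt (inv_nonneg.mpr ht.le)]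
        field_simp]
      exact Quaternion.coe_one
    have hqvv : qForm n v v = ((s : ℝ) : Quaternion ℝ) := by
      rw [← hab, SwpqAux.qForm_pair hwpq, Quaternion.self_mul_star, Quaternion.self_mul_star, hs]
      norm_cast
    have hqv'v' : qForm n v' v' = ((s' : ℝ) : Quaternion ℝ) := by
      rw [← hab', SwpqAux.qForm_pair hwpq, Quaternion.self_mul_star, Quaternion.self_mul_star, hs']
      norm_cast
    have hu1 : qForm n u u = 1 := by
      rw [hu, SwpqAux.qForm_smul_left, SwpqAux.qForm_smul_right, hqvv, hc, ← mul_assoc]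
      exact hnorm s hs0
    have hu'1 : qForm n u' u' = 1 := by
      rw [hu', SwpqAux.qForm_smul_left, SwpqAux.qForm_smul_right, hqv'v', hc', ← mul_assoc]
      exact hnorm s' hs'0
    have huu' : qForm n u u' = 0 := by
      rw [hu, hu', SwpqAux.qForm_smul_left, SwpqAux.qForm_smul_right,
        horth v hvmem v' hv'mem]
      simp
    have hu'u : qForm n u' u = 0 := by
      rw [← SwpqAux.star_qForm, huu', star_zero]
    have hu_supp : ∀ i, i ≠ w p → i ≠ w q → u i = 0 := by
      intro i h1 h2
      rw [hu]
      simp [hvval i h1 h2]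
    have hu'_supp : ∀ i, i ≠ w p → i ≠ w q → u' i = 0 := by
      intro i h1 h2
      rw [hu']
      simp [hv'val i h1 h2]
    -- the matrix
    set rows : Fin n → (Fin n → Quaternion ℝ) :=
      fun i => if i = w p then u else if i = w q then u' else Pi.single i 1 with hrows
    have hr1 : rows (w p) = u := by simp [hrows]
    have hr2 : rows (w q) = u' := by simp [hrows, hwpq.symm]
    have hr3 : ∀ i, i ≠ w p → i ≠ w q → rows i = Pi.single i 1 := by
      intro i h1 h2; simp [hrows, h1, h2]
    have hCC : Matrix.of rows * (Matrix.of rows)ᴴ = 1 := by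
      refine Matrix.ext fun i j => ?_
      have hform : (Matrix.of rows * (Matrix.of rows)ᴴ) i j = qForm n (rows i) (rows j) := by
        simp [qForm, Matrix.mul_apply, Matrix.conjTranspose_apply, Matrix.of_apply]
      rw [hform]
      by_cases hi1 : i = w p
      · subst hi1
        by_cases hj1 : j = w p
        · subst hj1; rw [hr1, hu1, Matrix.one_apply_eq]
        · by_cases hj2 : j = w q
          · subst hj2; rw [hr1, hr2, huu', Matrix.one_apply_ne hwpq]
          · rw [hr1, hr3 j hj1 hj2, SwpqAux.qForm_single_right, hu_supp j hj1 hj2,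
              Matrix.one_apply_ne (fun h => hj1 h.symm)]
      · by_cases hi2 : i = w q
        · subst hi2
          by_cases hj1 : j = w p
          · subst hj1; rw [hr2, hr1, hu'u, Matrix.one_apply_ne hwpq.symm]
          · by_cases hj2 : j = w q
            · subst hj2; rw [hr2, hu'1, Matrix.one_apply_eq]
            · rw [hr2, hr3 j hj1 hj2, SwpqAux.qForm_single_right, hu'_supp j hj1 hj2,
                Matrix.one_apply_ne (fun h => hj2 h.symm)]
        · rw [hr3 i hi1 hi2]
          by_cases hj1 : j = w p
          · subst hj1; rw [hr1, SwpqAux.qForm_single_left, hu_supp i hi1 hi2, star_zero,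
              Matrix.one_apply_ne hi1]
          · by_cases hj2 : j = w q
            · subst hj2; rw [hr2, SwpqAux.qForm_single_left, hu'_supp i hi1 hi2, star_zero,
                Matrix.one_apply_ne hi2]
            · rw [hr3 j hj1 hj2, SwpqAux.qForm_single_left, Matrix.one_apply, Pi.single_apply]
              simp [eq_comm]
              split <;> simp
    refine ⟨(Matrix.of rows)ᴴ, ?_, ?_, ?_⟩
    · rw [Matrix.conjTranspose_conjTranspose]
      exact SwpqAux.mul_eq_one_comm' hCC
    · intro i j hij h1 h2
      rw [Matrix.conjTranspose_apply]
      by_cases hj1 : j = w p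
      · subst hj1
        have hiq : i ≠ w q := fun h => h2 (by rw [h])
        rw [Matrix.of_apply] at *
        show star (rows (w p) i) = 0
        rw [hr1, hu_supp i hij hiq, star_zero]
      · by_cases hj2 : j = w q
        · subst hj2
          have hip : i ≠ w p := fun h => h1 (by rw [h])
          show star (rows (w q) i) = 0
          rw [hr2, hu'_supp i hip hij, star_zero]
        · show star (rows j i) = 0
          rw [hr3 j hj1 hj2, Pi.single_apply]
          simp [hij]
    · intro ν
      rw [Matrix.conjTranspose_conjTranspose, Matrix.single_one_vecMul]
      show L ν = Submodule.span (Quaternion ℝ) {rows (w ν)}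
      by_cases hν1 : ν = p
      · subst hν1
        rw [hr1, hu, Submodule.span_singleton_smul_eq (isUnit_iff_ne_zero.mpr hc0)]
        exact hvsp
      · by_cases hν2 : ν = q
        · subst hν2
          rw [hr2, hu', Submodule.span_singleton_smul_eq (isUnit_iff_ne_zero.mpr hc'0)]
          exact hv'sp
        · have h1 : w ν ≠ w p := fun h => hν1 (w.injective h)
          have h2 : w ν ≠ w q := fun h => hν2 (w.injective h)
          rw [hr3 _ h1 h2]
          exact hfix ν hν1 hν2
end

section
/- Every element of the subring 𝒢 lies in the image of the ring homomorphism from ℤ[x₁,…,xₙ,u₁,…,uₙ] to ∏_{w∈S_n} ℤ[u₁,…,uₙ] sending x_ν to the tuple (u_{w(ν)})_{w∈S_n} and u_ν to the constant tuple with every entry u_ν; that is, this homomorphism maps ℤ[x₁,…,xₙ,u₁,…,uₙ] onto 𝒢. -/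
open MvPolynomial

/-- The GKM set: tuples `(f_w)_{w ∈ S_n}` of polynomials in `ℤ[u₁,…,uₙ]` such that
`u_p - u_q` divides `f_w - f_{s_{pq} w}` for all `w` and all `p < q`. -/
def gkmSet (n : ℕ) : Set (Equiv.Perm (Fin n) → MvPolynomial (Fin n) ℤ) :=
  {f | ∀ w : Equiv.Perm (Fin n), ∀ p q : Fin n, p < q →
    (X p - X q : MvPolynomial (Fin n) ℤ) ∣ (f w - f (Equiv.swap p q * w))}

/-- The ring homomorphism `ℤ[x₁,…,xₙ,u₁,…,uₙ] → ∏_{w ∈ S_n} ℤ[u₁,…,uₙ]` sending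
`x_ν` to the tuple `(u_{w(ν)})_w` and `u_ν` to the constant tuple `u_ν`. -/
noncomputable def borelHom (n : ℕ) :
    MvPolynomial (Fin n ⊕ Fin n) ℤ →+* (Equiv.Perm (Fin n) → MvPolynomial (Fin n) ℤ) :=
  eval₂Hom (Int.castRingHom _)
    (Sum.elim (fun ν => fun w => X (w ν)) (fun ν => fun _ => X ν))

theorem Equiv.Perm.apply_inv_self {α : Type*} (f : Equiv.Perm α) (x : α) : f (f⁻¹ x) = x :=
  Equiv.apply_symm_apply f x

theorem Equiv.Perm.inv_apply_self {α : Type*} (f : Equiv.Perm α) (x : α) : f⁻¹ (f x) = x :=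
  Equiv.symm_apply_apply f x

namespace GKMAux

open Finset

variable {n : ℕ}

def invSet (n : ℕ) (σ : Equiv.Perm (Fin n)) : Finset (Fin n × Fin n) :=
  univ.filter fun p => p.1 < p.2 ∧ σ p.2 < σ p.1

lemma mem_invSet {σ : Equiv.Perm (Fin n)} {p : Fin n × Fin n} :
    p ∈ invSet n σ ↔ p.1 < p.2 ∧ σ p.2 < σ p.1 := by simp [invSet]

def len (w : Equiv.Perm (Fin n)) : ℕ := (invSet n w⁻¹).card

def allPairs (n : ℕ) : Finset (Fin n × Fin n) := univ.filter fun p => p.1 < p.2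

def NP (n : ℕ) : ℕ := (allPairs n).card

lemma invSet_subset (σ : Equiv.Perm (Fin n)) : invSet n σ ⊆ allPairs n := by
  intro p hp
  rw [mem_invSet] at hp
  simp [allPairs, hp.1]

lemma len_le (w : Equiv.Perm (Fin n)) : len w ≤ NP n :=
  Finset.card_le_card (invSet_subset _)

lemma swap_adj_lt {i j : Fin n} (hij : (i : ℕ) + 1 = j) {u v : Fin n} (huv : u < v) :
    Equiv.swap i j v < Equiv.swap i j u ↔ u = i ∧ v = j := by
  simp only [Equiv.swap_apply_def]
  split_ifs <;> (simp only [Fin.lt_def, Fin.ext_iff] at *) <;> omega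

lemma swap_crit {x y : Fin n} (hxy : x < y) {u v : Fin n} (huv : u < v) :
    Equiv.swap x y v < Equiv.swap x y u ↔
      (u = x ∧ v = y) ∨ (u = x ∧ x < v ∧ v < y) ∨ (v = y ∧ x < u ∧ u < y) := by
  simp only [Equiv.swap_apply_def]
  split_ifs <;> (simp only [Fin.lt_def, Fin.ext_iff] at *) <;> omega

/-- Right multiplication by an adjacent transposition at an ascent adds one inversion. -/
lemma invSet_mul_adjSwap (w : Equiv.Perm (Fin n)) {i j : Fin n} (hij : (i : ℕ) + 1 = j)
    (hw : w i < w j) :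
    invSet n (w * Equiv.swap i j)⁻¹ = insert (w i, w j) (invSet n w⁻¹) := by
  ext p
  obtain ⟨p1, p2⟩ := p
  simp only [mem_invSet, Finset.mem_insert, Prod.mk.injEq, mul_inv_rev, Equiv.swap_inv,
    Equiv.Perm.mul_apply]
  constructor
  · rintro ⟨h12, hlt⟩
    rcases lt_trichotomy (w⁻¹ p2) (w⁻¹ p1) with h | h | h
    · exact Or.inr ⟨h12, h⟩
    · exact absurd (w⁻¹.injective h) (ne_of_gt h12)
    · obtain ⟨hi, hj⟩ := (swap_adj_lt hij h).mp hlt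
      refine Or.inl ⟨?_, ?_⟩
      · rw [← hi, Equiv.Perm.apply_inv_self]
      · rw [← hj, Equiv.Perm.apply_inv_self]
  · rintro (⟨h1, h2⟩ | ⟨h12, hlt⟩)
    · subst h1; subst h2
      rw [Equiv.Perm.inv_apply_self, Equiv.Perm.inv_apply_self,
        Equiv.swap_apply_left, Equiv.swap_apply_right]
      refine ⟨hw, ?_⟩
      rw [Fin.lt_def]; omega
    · refine ⟨h12, ?_⟩
      have hne : Equiv.swap i j (w⁻¹ p2) ≠ Equiv.swap i j (w⁻¹ p1) :=
        (Equiv.injective _).ne (ne_of_lt hlt)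
      rcases lt_or_gt_of_ne hne with h | h
      · exact h
      · exfalso
        obtain ⟨hi, hj⟩ := (swap_adj_lt hij hlt).mp h
        have hp2 : p2 = w i := by rw [← hi, Equiv.Perm.apply_inv_self]
        have hp1 : p1 = w j := by rw [← hj, Equiv.Perm.apply_inv_self]
        rw [hp1, hp2] at h12
        exact lt_asymm h12 hw

lemma notMem_invSet_of_ascent (w : Equiv.Perm (Fin n)) {i j : Fin n} (hij : (i : ℕ) + 1 = j)
    (hw : w i < w j) : (w i, w j) ∉ invSet n w⁻¹ := by
  rw [mem_invSet]
  rintro ⟨-, hlt⟩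
  rw [Equiv.Perm.inv_apply_self, Equiv.Perm.inv_apply_self, Fin.lt_def] at hlt
  omega

lemma len_mul_adjSwap (w : Equiv.Perm (Fin n)) {i j : Fin n} (hij : (i : ℕ) + 1 = j)
    (hw : w i < w j) : len (w * Equiv.swap i j) = len w + 1 := by
  unfold len
  rw [invSet_mul_adjSwap w hij hw,
    Finset.card_insert_of_notMem (notMem_invSet_of_ascent w hij hw)]

lemma len_mul_adjSwap_le (v : Equiv.Perm (Fin n)) {i j : Fin n} (hij : (i : ℕ) + 1 = j) :
    len (v * Equiv.swap i j) ≤ len v + 1 := by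
  rcases lt_trichotomy (v i) (v j) with h | h | h
  · rw [len_mul_adjSwap v hij h]
  · exfalso
    have : i = j := v.injective h
    rw [← Fin.val_eq_val] at this
    omega
  · set v' := v * Equiv.swap i j with hv'
    have h1 : v' i = v j := by rw [hv']; simp
    have h2 : v' j = v i := by rw [hv']; simp
    have hasc : v' i < v' j := by rw [h1, h2]; exact h
    have := len_mul_adjSwap v' hij hasc
    have hvv : v' * Equiv.swap i j = v := by
      rw [hv', mul_assoc, Equiv.swap_mul_self, mul_one]
    rw [hvv] at this
    omega

/-- Left multiplication by the transposition of an inverted value pair decreases length. -/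
lemma len_swap_mul_lt (w : Equiv.Perm (Fin n)) {x y : Fin n} (hxy : x < y)
    (hw : w⁻¹ y < w⁻¹ x) : len (Equiv.swap x y * w) < len w := by
  set σ := w⁻¹ with hσ
  set t := Equiv.swap x y with ht
  have hmem : (x, y) ∈ invSet n σ := mem_invSet.2 ⟨hxy, hw⟩
  have hinv : (t * w)⁻¹ = σ * t := by
    rw [mul_inv_rev, hσ, ht, Equiv.swap_inv]
  have hcard : (invSet n (σ * t)).card ≤ ((invSet n σ).erase (x, y)).card := by
    apply Finset.card_le_card_of_injOn (fun p => if t p.2 < t p.1 then p else (t p.1, t p.2))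
    · intro p hp
      simp only [Finset.mem_coe] at hp ⊢
      rw [mem_invSet] at hp
      obtain ⟨h12, hlt⟩ := hp
      simp only [Equiv.Perm.mul_apply] at hlt
      by_cases hcrit : t p.2 < t p.1
      · simp only [if_pos hcrit]
        rcases (swap_crit hxy h12).mp hcrit with ⟨h1, h2⟩ | ⟨h1, h2, h3⟩ | ⟨h1, h2, h3⟩
        · exfalso
          rw [h1, h2, ht, Equiv.swap_apply_right, Equiv.swap_apply_left] at hlt
          exact lt_asymm hlt hw
        · have hy : t p.2 = p.2 := by
            rw [ht]; exact Equiv.swap_apply_of_ne_of_ne (ne_of_gt h2) (ne_of_lt h3)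
          have hx : t p.1 = y := by rw [h1, ht, Equiv.swap_apply_left]
          rw [hy, hx] at hlt
          rw [Finset.mem_erase]
          constructor
          · intro hc; rw [Prod.ext_iff] at hc; exact (ne_of_lt h3) hc.2
          · exact mem_invSet.2 ⟨h12, by rw [h1]; exact hlt.trans hw⟩
        · have hx : t p.2 = x := by rw [h1, ht, Equiv.swap_apply_right]
          have hu : t p.1 = p.1 := by
            rw [ht]; exact Equiv.swap_apply_of_ne_of_ne (ne_of_gt h2) (ne_of_lt h3)
          rw [hx, hu] at hlt
          rw [Finset.mem_erase]
          constructor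
          · intro hc; rw [Prod.ext_iff] at hc; exact (ne_of_gt h2) hc.1
          · exact mem_invSet.2 ⟨h12, by rw [h1]; exact hw.trans hlt⟩
      · simp only [if_neg hcrit]
        have hne : t p.1 ≠ t p.2 := (Equiv.injective t).ne (ne_of_lt h12)
        have hlt' : t p.1 < t p.2 := lt_of_le_of_ne (not_lt.mp hcrit) hne
        rw [Finset.mem_erase]
        constructor
        · intro hc
          rw [Prod.ext_iff] at hc
          obtain ⟨hc1, hc2⟩ := hc
          simp only at hc1 hc2
          have hp1 : p.1 = y := by
            have := congrArg t hc1
            rwa [ht, Equiv.swap_apply_self, Equiv.swap_apply_left] at this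
          have hp2 : p.2 = x := by
            have := congrArg t hc2
            rwa [ht, Equiv.swap_apply_self, Equiv.swap_apply_right] at this
          rw [hp1, hp2] at h12
          exact lt_asymm h12 hxy
        · exact mem_invSet.2 ⟨hlt', hlt⟩
    · intro p hp q hq h
      rw [Finset.mem_coe, mem_invSet] at hp hq
      by_cases hcp : t p.2 < t p.1 <;> by_cases hcq : t q.2 < t q.1 <;>
        simp only [if_pos, if_neg, hcp, hcq, if_true, if_false] at h
      · exact h
      · exfalso
        have hp1 : p.1 = t q.1 := by rw [h]
        have hp2 : p.2 = t q.2 := by rw [h]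
        rw [hp1, hp2, ht, Equiv.swap_apply_self, Equiv.swap_apply_self] at hcp
        exact lt_asymm hcp hq.1
      · exfalso
        have hq1 : q.1 = t p.1 := by rw [← h]
        have hq2 : q.2 = t p.2 := by rw [← h]
        rw [hq1, hq2, ht, Equiv.swap_apply_self, Equiv.swap_apply_self] at hcq
        exact lt_asymm hcq hp.1
      · have h1 : t p.1 = t q.1 := by rw [Prod.ext_iff] at h; exact h.1
        have h2 : t p.2 = t q.2 := by rw [Prod.ext_iff] at h; exact h.2
        exact Prod.ext (Equiv.injective t h1) (Equiv.injective t h2)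
  have hpos : 0 < (invSet n σ).card := Finset.card_pos.2 ⟨_, hmem⟩
  have herase := Finset.card_erase_of_mem hmem
  have hl1 : len (Equiv.swap x y * w) = (invSet n (σ * t)).card := by
    unfold len
    rw [mul_inv_rev, Equiv.swap_inv, ← hσ, ← ht]
  have hl2 : len w = (invSet n σ).card := by unfold len; rw [← hσ]
  have hl3 : len (Equiv.swap x y * w) = len (t * w) := by rw [ht]
  omega

lemma desc_all {w : Equiv.Perm (Fin n)} (h : ∀ i j : Fin n, (i : ℕ) + 1 = j → w j < w i) :
    ∀ {i j : Fin n}, i < j → w j < w i := by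
  have key : ∀ d : ℕ, ∀ i j : Fin n, (j : ℕ) = (i : ℕ) + d + 1 → w j < w i := by
    intro d
    induction d with
    | zero => intro i j hj; exact h i j (by omega)
    | succ d IH =>
      intro i j hj
      have hlt : (i : ℕ) + d + 1 < n := by have := j.isLt; omega
      have h1 : w ⟨(i : ℕ) + d + 1, hlt⟩ < w i := IH i _ rfl
      have h2 : w j < w ⟨(i : ℕ) + d + 1, hlt⟩ := h _ j (by simp; omega)
      exact h2.trans h1
  intro i j hij
  rw [Fin.lt_def] at hij
  exact key ((j : ℕ) - (i : ℕ) - 1) i j (by omega)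

lemma invSet_inv_of_desc {w : Equiv.Perm (Fin n)}
    (h : ∀ i j : Fin n, (i : ℕ) + 1 = j → w j < w i) :
    invSet n w⁻¹ = allPairs n := by
  apply Finset.Subset.antisymm (invSet_subset _)
  intro p hp
  simp only [allPairs, Finset.mem_filter] at hp
  rw [mem_invSet]
  refine ⟨hp.2, ?_⟩
  rcases lt_trichotomy (w⁻¹ p.2) (w⁻¹ p.1) with hh | hh | hh
  · exact hh
  · exact absurd (w⁻¹.injective hh) (ne_of_gt hp.2)
  · exfalso
    have := desc_all h hh
    rw [Equiv.Perm.apply_inv_self, Equiv.Perm.apply_inv_self] at this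
    exact lt_asymm this hp.2

variable {n : ℕ}

lemma borelHom_apply (n : ℕ) (P : MvPolynomial (Fin n ⊕ Fin n) ℤ) (v : Equiv.Perm (Fin n)) :
    borelHom n P v
      = eval₂ (Int.castRingHom (MvPolynomial (Fin n) ℤ)) (Sum.elim (fun ν => X (v ν)) X) P := by
  have h : (Pi.evalRingHom (fun _ : Equiv.Perm (Fin n) => MvPolynomial (Fin n) ℤ) v).comp
        (borelHom n)
      = eval₂Hom (Int.castRingHom (MvPolynomial (Fin n) ℤ)) (Sum.elim (fun ν => X (v ν)) X) := by
    rw [borelHom, comp_eval₂Hom]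
    have hf : (Pi.evalRingHom (fun _ : Equiv.Perm (Fin n) => MvPolynomial (Fin n) ℤ) v).comp
        (Int.castRingHom _) = Int.castRingHom (MvPolynomial (Fin n) ℤ) :=
      Subsingleton.elim _ _
    have hg : (fun i => (Pi.evalRingHom (fun _ : Equiv.Perm (Fin n) => MvPolynomial (Fin n) ℤ) v)
          ((Sum.elim (fun ν => fun w => X (w ν)) (fun ν => fun _ => X ν) :
            Fin n ⊕ Fin n → (Equiv.Perm (Fin n) → MvPolynomial (Fin n) ℤ)) i))
        = (Sum.elim (fun ν => X (v ν)) X : Fin n ⊕ Fin n → MvPolynomial (Fin n) ℤ) := by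
      funext s; cases s <;> rfl
    rw [hf, hg]
  exact RingHom.congr_fun h P

lemma borelHom_X_inl (ν : Fin n) (v : Equiv.Perm (Fin n)) :
    borelHom n (X (Sum.inl ν)) v = X (v ν) := by
  rw [borelHom_apply, eval₂_X]; rfl

lemma borelHom_const (c : MvPolynomial (Fin n) ℤ) (v : Equiv.Perm (Fin n)) :
    borelHom n (rename Sum.inr c) v = c := by
  rw [borelHom_apply, eval₂_rename]
  have h1 : ((Sum.elim (fun ν => X (v ν)) X : Fin n ⊕ Fin n → MvPolynomial (Fin n) ℤ)
      ∘ Sum.inr) = X := rfl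
  rw [h1]
  have h2 : eval₂Hom (Int.castRingHom (MvPolynomial (Fin n) ℤ)) X
      = RingHom.id (MvPolynomial (Fin n) ℤ) := by
    apply MvPolynomial.ringHom_ext
    · intro r
      simp only [eval₂Hom_C, RingHom.id_apply]
      exact (eq_intCast (C : ℤ →+* MvPolynomial (Fin n) ℤ) r).symm
    · intro s; simp
  exact RingHom.congr_fun h2 c

lemma borelHom_rename_swap (i j : Fin n) (P : MvPolynomial (Fin n ⊕ Fin n) ℤ)
    (v : Equiv.Perm (Fin n)) :
    borelHom n (rename (Equiv.swap (Sum.inl i) (Sum.inl j)) P) v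
      = borelHom n P (v * Equiv.swap i j) := by
  rw [borelHom_apply, borelHom_apply, eval₂_rename]
  congr 1
  funext s
  cases s with
  | inl ν =>
    have h : Equiv.swap (Sum.inl i : Fin n ⊕ Fin n) (Sum.inl j) (Sum.inl ν)
        = Sum.inl (Equiv.swap i j ν) :=
      Function.Injective.swap_apply Sum.inl_injective i j ν
    show Sum.elim (fun ν => X (v ν)) X (Equiv.swap (Sum.inl i) (Sum.inl j) (Sum.inl ν)) = _
    rw [h]
    rfl
  | inr ν =>
    have h : Equiv.swap (Sum.inl i : Fin n ⊕ Fin n) (Sum.inl j) (Sum.inr ν) = Sum.inr ν :=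
      Equiv.swap_apply_of_ne_of_ne (by simp) (by simp)
    show Sum.elim (fun ν => X (v ν)) X (Equiv.swap (Sum.inl i) (Sum.inl j) (Sum.inr ν)) = _
    rw [h]
    rfl

lemma dvd_sub_rename_swap {σ : Type*} [DecidableEq σ] (a b : σ) (P : MvPolynomial σ ℤ) :
    (X a - X b : MvPolynomial σ ℤ) ∣ P - rename (Equiv.swap a b) P := by
  induction P using MvPolynomial.induction_on with
  | C r => rw [rename_C]; simp
  | add p q hp hq =>
    have h : p + q - rename (⇑(Equiv.swap a b)) (p + q)
        = (p - rename (⇑(Equiv.swap a b)) p) + (q - rename (⇑(Equiv.swap a b)) q) := by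
      rw [map_add]; ring
    rw [h]; exact dvd_add hp hq
  | mul_X p s hp =>
    rw [map_mul, rename_X]
    have key : p * X s - rename (⇑(Equiv.swap a b)) p * X (Equiv.swap a b s)
        = (p - rename (⇑(Equiv.swap a b)) p) * X (Equiv.swap a b s)
          + p * (X s - X (Equiv.swap a b s)) := by ring
    rw [key]
    refine dvd_add (Dvd.dvd.mul_right hp _) (Dvd.dvd.mul_left ?_ p)
    by_cases hsa : s = a
    · rw [hsa, Equiv.swap_apply_left]
    · by_cases hsb : s = b
      · rw [hsb, Equiv.swap_apply_right,
          show (X b - X a : MvPolynomial σ ℤ) = -(X a - X b) by ring]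
        exact dvd_neg.mpr dvd_rfl
      · rw [Equiv.swap_apply_of_ne_of_ne hsa hsb]; simp

lemma borelHom_gkm (P : MvPolynomial (Fin n ⊕ Fin n) ℤ) (p q : Fin n)
    (v : Equiv.Perm (Fin n)) :
    (X p - X q : MvPolynomial (Fin n) ℤ)
      ∣ borelHom n P v - borelHom n P (Equiv.swap p q * v) := by
  induction P using MvPolynomial.induction_on generalizing v with
  | C r =>
    rw [borelHom_apply, borelHom_apply, eval₂_C, eval₂_C, sub_self]
    exact dvd_zero _
  | add f g hf hg =>
    rw [map_add, Pi.add_apply, Pi.add_apply]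
    have h : borelHom n f v + borelHom n g v
        - (borelHom n f (Equiv.swap p q * v) + borelHom n g (Equiv.swap p q * v))
        = (borelHom n f v - borelHom n f (Equiv.swap p q * v))
          + (borelHom n g v - borelHom n g (Equiv.swap p q * v)) := by ring
    rw [h]
    exact dvd_add (hf v) (hg v)
  | mul_X f s hf =>
    rw [map_mul, Pi.mul_apply, Pi.mul_apply]
    have key : borelHom n f v * borelHom n (X s) v
        - borelHom n f (Equiv.swap p q * v) * borelHom n (X s) (Equiv.swap p q * v)
        = (borelHom n f v - borelHom n f (Equiv.swap p q * v)) * borelHom n (X s) v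
          + borelHom n f (Equiv.swap p q * v)
            * (borelHom n (X s) v - borelHom n (X s) (Equiv.swap p q * v)) := by ring
    rw [key]
    refine dvd_add (Dvd.dvd.mul_right (hf v) _) (Dvd.dvd.mul_left ?_ _)
    cases s with
    | inl ν =>
      rw [borelHom_X_inl, borelHom_X_inl]
      have hmul : (Equiv.swap p q * v) ν = Equiv.swap p q (v ν) := rfl
      rw [hmul]
      by_cases hp : v ν = p
      · rw [hp, Equiv.swap_apply_left]
      · by_cases hq : v ν = q
        · rw [hq, Equiv.swap_apply_right,
            show (X q - X p : MvPolynomial (Fin n) ℤ) = -(X p - X q) by ring]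
          exact dvd_neg.mpr dvd_rfl
        · rw [Equiv.swap_apply_of_ne_of_ne hp hq]; simp
    | inr ν =>
      rw [borelHom_apply, borelHom_apply, eval₂_X, eval₂_X]
      simp

lemma prime_X_sub_X {a b : Fin n} (hab : a ≠ b) :
    Prime (X a - X b : MvPolynomial (Fin n) ℤ) := by
  cases n with
  | zero => exact a.elim0
  | succ m =>
    set ρ : Equiv.Perm (Fin (m + 1)) := Equiv.swap 0 a with hρ
    have hb0 : ρ b ≠ 0 := by
      intro h
      apply hab
      have ha : ρ a = 0 := Equiv.swap_apply_right 0 a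
      exact (Equiv.injective ρ (h.trans ha.symm)).symm
    obtain ⟨k, hk⟩ := Fin.exists_succ_eq_of_ne_zero hb0
    set E := (MvPolynomial.renameEquiv ℤ ρ).trans (MvPolynomial.finSuccEquiv ℤ m) with hE
    have key : E (X a - X b) = Polynomial.X - Polynomial.C (X k) := by
      rw [hE]
      simp only [AlgEquiv.trans_apply, map_sub, renameEquiv_apply, rename_X]
      rw [show ρ a = 0 from Equiv.swap_apply_right 0 a, ← hk]
      rw [finSuccEquiv_X_zero, finSuccEquiv_X_succ]
    have hprime : Prime (E (X a - X b)) := by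
      rw [key]
      exact Polynomial.prime_X_sub_C (X k)
    exact (MulEquiv.prime_iff E).mp hprime

lemma not_dvd_pair {x1 y1 x2 y2 : Fin n} (h1 : x1 < y1) (h2 : x2 < y2)
    (hne : (x1, y1) ≠ (x2, y2)) :
    ¬ ((X y1 - X x1 : MvPolynomial (Fin n) ℤ) ∣ (X y2 - X x2)) := by
  intro hdvd
  classical
  set φ : MvPolynomial (Fin n) ℤ →+* MvPolynomial (Fin n) ℤ :=
    (eval₂Hom C (fun k => if k = y1 then X x1 else X k)) with hφ
  have hzero : φ (X y1 - X x1) = 0 := by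
    rw [hφ]; simp
  have himg : φ (X y2 - X x2) = 0 := by
    obtain ⟨c, hc⟩ := hdvd
    rw [hc, map_mul, hzero, zero_mul]
  rw [hφ] at himg
  simp only [map_sub, eval₂Hom_X'] at himg
  have hsub := sub_eq_zero.mp himg
  have hX : Function.Injective (X : Fin n → MvPolynomial (Fin n) ℤ) := X_injective
  by_cases hy : y2 = y1
  · rw [if_pos hy] at hsub
    have hx2 : x2 ≠ y1 := by intro h; rw [← hy] at h; exact absurd h (ne_of_lt h2)
    rw [if_neg hx2] at hsub
    have : x1 = x2 := hX hsub
    exact hne (by rw [this, hy])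
  · rw [if_neg hy] at hsub
    by_cases hx : x2 = y1
    · rw [if_pos hx] at hsub
      have : y2 = x1 := hX hsub
      rw [Fin.lt_def] at h1 h2
      rw [← Fin.val_eq_val] at this hx
      omega
    · rw [if_neg hx] at hsub
      exact (ne_of_gt h2) (hX hsub)

lemma prod_primes_dvd {R : Type*} [CommRing R] [IsDomain R] {ι : Type*} [DecidableEq ι]
    (s : Finset ι) (p : ι → R) (a : R)
    (hp : ∀ i ∈ s, Prime (p i)) (hdvd : ∀ i ∈ s, p i ∣ a)
    (hnd : ∀ i ∈ s, ∀ j ∈ s, i ≠ j → ¬ p i ∣ p j) :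
    (∏ i ∈ s, p i) ∣ a := by
  classical
  suffices H : ∀ (t : Finset ι), (∀ i ∈ t, Prime (p i)) →
      (∀ i ∈ t, ∀ j ∈ t, i ≠ j → ¬ p i ∣ p j) →
      ∀ b : R, (∀ i ∈ t, p i ∣ b) → (∏ i ∈ t, p i) ∣ b by
    exact H s hp hnd a hdvd
  intro t
  induction t using Finset.induction_on with
  | empty => intro _ _ b _; simp
  | insert i t hi IH =>
    intro hp' hnd' b hdvd'
    obtain ⟨c, hc⟩ := hdvd' i (Finset.mem_insert_self i t)
    rw [Finset.prod_insert hi, hc]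
    refine mul_dvd_mul_left _ (IH (fun j hj => hp' j (Finset.mem_insert_of_mem hj))
      (fun j hj k hk hjk => hnd' j (Finset.mem_insert_of_mem hj) k
        (Finset.mem_insert_of_mem hk) hjk) c ?_)
    intro j hj
    have hja : p j ∣ p i * c := hc ▸ hdvd' j (Finset.mem_insert_of_mem hj)
    rcases (hp' j (Finset.mem_insert_of_mem hj)).2.2 _ _ hja with h | h
    · exact absurd h (hnd' j (Finset.mem_insert_of_mem hj) i (Finset.mem_insert_self i t)
        (by rintro rfl; exact hi hj))
    · exact h

lemma borelHom_X_inr (ν : Fin n) (v : Equiv.Perm (Fin n)) :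
    borelHom n (X (Sum.inr ν)) v = X ν := by
  rw [borelHom_apply, eval₂_X]; rfl

/-- The product of linear forms attached to the inversion set of `w`. -/
noncomputable def pye (w : Equiv.Perm (Fin n)) : MvPolynomial (Fin n) ℤ :=
  ∏ p ∈ invSet n w⁻¹, (X p.2 - X p.1)

lemma pye_mul_adjSwap (w : Equiv.Perm (Fin n)) {i j : Fin n} (hij : (i : ℕ) + 1 = j)
    (hw : w i < w j) :
    pye (w * Equiv.swap i j) = (X (w j) - X (w i)) * pye w := by
  unfold pye
  rw [invSet_mul_adjSwap w hij hw,
    Finset.prod_insert (notMem_invSet_of_ascent w hij hw)]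

lemma tau_base {w : Equiv.Perm (Fin n)}
    (hdesc : ∀ i j : Fin n, (i : ℕ) + 1 = j → w j < w i) :
    ∃ P, (∀ v, v ≠ w → borelHom n P v = 0) ∧ borelHom n P w = pye w := by
  classical
  set T : Finset (Fin n × Fin n) := Finset.univ.filter (fun p => p.2 < w p.1) with hT
  refine ⟨∏ p ∈ T, (X (Sum.inl p.1) - X (Sum.inr p.2)), ?_, ?_⟩
  · intro v hv
    rw [map_prod, Finset.prod_apply]
    -- find i with v i < w i
    have hex : ∃ i, v i < w i := by
      by_contra hno
      push_neg at hno
      have hsum : ∑ i, ((w i : ℕ)) = ∑ i, ((v i : ℕ)) := by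
        rw [Equiv.sum_comp w (fun k : Fin n => (k : ℕ)),
          Equiv.sum_comp v (fun k : Fin n => (k : ℕ))]
      have hle : ∀ i ∈ Finset.univ, ((w i : ℕ)) ≤ ((v i : ℕ)) := by
        intro i _
        exact hno i
      have heq := (Finset.sum_eq_sum_iff_of_le hle).mp hsum
      apply hv
      apply Equiv.ext
      intro i
      exact Fin.val_injective (heq i (Finset.mem_univ i)).symm
    obtain ⟨i, hi⟩ := hex
    apply Finset.prod_eq_zero (i := (i, v i))
    · rw [hT]
      simp only [Finset.mem_filter, Finset.mem_univ, true_and]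
      exact hi
    · rw [map_sub, Pi.sub_apply, borelHom_X_inl, borelHom_X_inr, sub_self]
  · rw [map_prod, Finset.prod_apply]
    have hstep : ∀ p ∈ T,
        (borelHom n (X (Sum.inl p.1) - X (Sum.inr p.2))) w = X (w p.1) - X p.2 := by
      intro p _
      rw [map_sub, Pi.sub_apply, borelHom_X_inl, borelHom_X_inr]
    rw [Finset.prod_congr rfl hstep]
    unfold pye
    rw [invSet_inv_of_desc hdesc]
    apply Finset.prod_nbij' (i := fun p => (p.2, w p.1)) (j := fun q => (w⁻¹ q.2, q.1))
    · intro p hp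
      rw [hT] at hp
      simp only [Finset.mem_filter, Finset.mem_univ, true_and] at hp
      simp only [allPairs, Finset.mem_filter, Finset.mem_univ, true_and]
      exact hp
    · intro q hq
      simp only [allPairs, Finset.mem_filter, Finset.mem_univ, true_and] at hq
      rw [hT]
      simp only [Finset.mem_filter, Finset.mem_univ, true_and]
      rw [Equiv.Perm.apply_inv_self]
      exact hq
    · intro p hp
      rw [hT] at hp
      simp only [Finset.mem_filter, Finset.mem_univ, true_and] at hp
      simp only [Equiv.Perm.inv_apply_self]
    · intro q hq
      simp only [Equiv.Perm.apply_inv_self]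
    · intro p hp
      rfl

lemma tau_exists :
    ∀ (m : ℕ) (w : Equiv.Perm (Fin n)), NP n - len w ≤ m →
      ∃ P, (∀ v, v ≠ w → len v ≤ len w → borelHom n P v = 0) ∧
        borelHom n P w = pye w := by
  have hbase : ∀ (w : Equiv.Perm (Fin n)),
      (¬ ∃ i j : Fin n, (i : ℕ) + 1 = (j : ℕ) ∧ w i < w j) →
      ∃ P, (∀ v, v ≠ w → len v ≤ len w → borelHom n P v = 0) ∧
        borelHom n P w = pye w := by
    intro w hasc
    push_neg at hasc
    have hdesc : ∀ i j : Fin n, (i : ℕ) + 1 = j → w j < w i := by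
      intro i j hij
      have h1 := hasc i j hij
      have h2 : w i ≠ w j := by
        intro h
        have := w.injective h
        rw [← Fin.val_eq_val] at this
        omega
      exact lt_of_le_of_ne h1 (fun h => h2 h.symm)
    obtain ⟨P, h0, h1⟩ := tau_base hdesc
    exact ⟨P, fun v hv _ => h0 v hv, h1⟩
  intro m
  induction m with
  | zero =>
    intro w hm
    by_cases hasc : ∃ i j : Fin n, (i : ℕ) + 1 = (j : ℕ) ∧ w i < w j
    · exfalso
      obtain ⟨i, j, hij, hlt⟩ := hasc
      have h1 : len (w * Equiv.swap i j) = len w + 1 := len_mul_adjSwap w hij hlt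
      have h2 := len_le (w * Equiv.swap i j)
      omega
    · exact hbase w hasc
  | succ m IH =>
    intro w hm
    by_cases hasc : ∃ i j : Fin n, (i : ℕ) + 1 = (j : ℕ) ∧ w i < w j
    · obtain ⟨i, j, hij, hlt⟩ := hasc
      set w' := w * Equiv.swap i j with hw'
      have hlen : len w' = len w + 1 := len_mul_adjSwap w hij hlt
      have hNP := len_le w'
      obtain ⟨P', hP0, hP1⟩ := IH w' (by omega)
      obtain ⟨Q, hQ⟩ := dvd_sub_rename_swap (Sum.inl i) (Sum.inl j) P'
      have hstar : ∀ v, (X (v i) - X (v j)) * borelHom n Q v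
          = borelHom n P' v - borelHom n P' (v * Equiv.swap i j) := by
        intro v
        have h1 := congrArg (fun z => borelHom n z v) hQ
        simp only [map_sub, map_mul, Pi.sub_apply, Pi.mul_apply] at h1
        rw [borelHom_rename_swap] at h1
        rw [h1, borelHom_X_inl, borelHom_X_inl]
      have hique : ∀ v : Equiv.Perm (Fin n), X (v i) - X (v j) ≠ (0 : MvPolynomial (Fin n) ℤ) := by
        intro v
        rw [sub_ne_zero]
        apply X_injective.ne
        apply v.injective.ne
        rw [← Fin.val_ne_iff]
        omega
      have hww' : w ≠ w' := by
        intro h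
        have : len w = len w' := by rw [← h]
        omega
      have hP'w : borelHom n P' w = 0 := hP0 w hww' (by omega)
      refine ⟨Q, ?_, ?_⟩
      · intro v hv hlenv
        have h1 : borelHom n P' v = 0 := by
          apply hP0 v ?_ (by omega)
          intro h
          rw [h] at hlenv
          omega
        have h2 : borelHom n P' (v * Equiv.swap i j) = 0 := by
          apply hP0 (v * Equiv.swap i j) ?_ ?_
          · intro h
            rw [hw'] at h
            have := mul_right_cancel h
            exact hv this
          · have := len_mul_adjSwap_le v hij
            omega
        have h3 := hstar v
        rw [h1, h2, sub_zero] at h3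
        rcases mul_eq_zero.mp h3 with h | h
        · exact absurd h (hique v)
        · exact h
      · have h3 := hstar w
        rw [hP'w, zero_sub, ← hw'] at h3
        rw [hP1] at h3
        rw [pye_mul_adjSwap w hij hlt] at h3
        have h4 : (X (w i) - X (w j)) * borelHom n Q w
            = (X (w i) - X (w j)) * pye w := by
          rw [h3]; ring
        exact mul_left_cancel₀ (hique w) h4
    · exact hbase w hasc

lemma pye_dvd {k : ℕ} (f : Equiv.Perm (Fin n) → MvPolynomial (Fin n) ℤ)
    (hf : f ∈ gkmSet n) (hvan : ∀ v, len v < k → f v = 0)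
    (w : Equiv.Perm (Fin n)) (hw : len w = k) : pye w ∣ f w := by
  classical
  unfold pye
  apply prod_primes_dvd
  · intro p hp
    rw [mem_invSet] at hp
    exact prime_X_sub_X (ne_of_gt hp.1)
  · intro p hp
    rw [mem_invSet] at hp
    have h1 := hf w p.1 p.2 hp.1
    have h2 : f (Equiv.swap p.1 p.2 * w) = 0 := by
      apply hvan
      have := len_swap_mul_lt w hp.1 hp.2
      omega
    rw [h2, sub_zero] at h1
    rw [show (X p.2 - X p.1 : MvPolynomial (Fin n) ℤ) = -(X p.1 - X p.2) by ring]
    exact (neg_dvd).mpr h1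
  · intro p hp q hq hpq
    rw [mem_invSet] at hp hq
    apply not_dvd_pair hp.1 hq.1
    intro h
    apply hpq
    have h1 : p.1 = q.1 := congrArg Prod.fst h
    have h2 : p.2 = q.2 := congrArg Prod.snd h
    exact Prod.ext h1 h2

lemma main_aux : ∀ (d k : ℕ), NP n + 1 ≤ k + d →
    ∀ f ∈ gkmSet n, (∀ v, len v < k → f v = 0) →
    ∃ P, borelHom n P = f := by
  intro d
  induction d with
  | zero =>
    intro k hk f _ hvan
    refine ⟨0, ?_⟩
    rw [map_zero]
    funext v
    rw [Pi.zero_apply]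
    exact (hvan v (by have := len_le v; omega)).symm
  | succ d IH =>
    intro k hk f hf hvan
    classical
    have hstep : ∀ w : Equiv.Perm (Fin n), len w = k →
        ∃ Pw : MvPolynomial (Fin n ⊕ Fin n) ℤ,
          (∀ v, len v ≤ k → v ≠ w → borelHom n Pw v = 0) ∧ borelHom n Pw w = f w := by
      intro w hw
      obtain ⟨T, hT0, hT1⟩ := tau_exists (NP n - len w) w le_rfl
      have hdvd : pye w ∣ f w := pye_dvd f hf hvan w hw
      rw [← hT1] at hdvd
      obtain ⟨c, hc⟩ := hdvd
      refine ⟨T * rename Sum.inr c, ?_, ?_⟩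
      · intro v hlv hvw
        rw [map_mul, Pi.mul_apply, hT0 v hvw (by omega), zero_mul]
      · rw [map_mul, Pi.mul_apply, borelHom_const, ← hc]
    choose Φ hΦ0 hΦ1 using fun w : {w : Equiv.Perm (Fin n) // len w = k} => hstep w.1 w.2
    set S : MvPolynomial (Fin n ⊕ Fin n) ℤ := ∑ w : {w : Equiv.Perm (Fin n) // len w = k}, Φ w
      with hS
    have hSv : ∀ v, borelHom n S v
        = ∑ w : {w : Equiv.Perm (Fin n) // len w = k}, borelHom n (Φ w) v := by
      intro v
      rw [hS, map_sum, Finset.sum_apply]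
    have hf' : (f - borelHom n S) ∈ gkmSet n := by
      intro w p q hpq
      have h1 := hf w p q hpq
      have h2 := borelHom_gkm S p q w
      have h3 : (f - borelHom n S) w - (f - borelHom n S) (Equiv.swap p q * w)
          = (f w - f (Equiv.swap p q * w))
            - (borelHom n S w - borelHom n S (Equiv.swap p q * w)) := by
        simp only [Pi.sub_apply]
        ring
      rw [h3]
      exact dvd_sub h1 h2
    have hvan' : ∀ v, len v < k + 1 → (f - borelHom n S) v = 0 := by
      intro v hv
      by_cases hvk : len v = k
      · rw [Pi.sub_apply, hSv]
        rw [Fintype.sum_eq_single (⟨v, hvk⟩ : {w : Equiv.Perm (Fin n) // len w = k})]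
        · rw [hΦ1 ⟨v, hvk⟩, sub_self]
        · intro w hw
          apply hΦ0 w v (le_of_eq hvk)
          intro h
          apply hw
          apply Subtype.ext
          exact h.symm
      · have hvlt : len v < k := by omega
        rw [Pi.sub_apply, hvan v hvlt, hSv, Finset.sum_eq_zero, sub_zero]
        intro w _
        apply hΦ0 w v (by omega)
        intro h
        apply hvk
        rw [h]
        exact w.2
    obtain ⟨P', hP'⟩ := IH (k + 1) (by omega) (f - borelHom n S) hf' hvan'
    refine ⟨P' + S, ?_⟩
    rw [map_add, hP']
    funext v
    simp only [Pi.add_apply, Pi.sub_apply]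
    ring

end GKMAux

/-- Surjectivity onto the GKM subring: every element of `𝒢` lies in the image of the
homomorphism `ℤ[x₁,…,xₙ,u₁,…,uₙ] → ∏_{w ∈ S_n} ℤ[u₁,…,uₙ]`. -/
theorem gkmSet_subset_range_borelHom (n : ℕ) (hn : 1 ≤ n) :
    ∀ f ∈ gkmSet n, ∃ P : MvPolynomial (Fin n ⊕ Fin n) ℤ, borelHom n P = f := by
  intro f hf
  exact GKMAux.main_aux (GKMAux.NP n + 1) 0 (by omega) f hf (fun v hv => absurd hv (by omega))
end
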